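/- Let β > 2, γ > -1, K > 0, and let ξ be i.i.d. centered with E|ξ|^p ≤ K (β-p)^{-γ-1} for all p ∈ [2, β). Then there is C = C(β, γ, K) such that for every finite family ξ_1, …, ξ_n of independent copies and every p ∈ [2, β): E| n^{-1/2} Σ ξ_i |^p ≤ C (β-p)^{-γ-1}, with C independent of both n and p. -/

import Mathlib

open MeasureTheory Real ProbabilityTheory

private lemma exp_le_quad_neg {x : ℝ} (hx : x ≤ 0) : Real.exp x ≤ 1 + x + x ^ 2 := by
  have h1 : 1 - x ≤ Real.exp (-x) := by linarith [Real.add_one_le_exp (-x)]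
  have h3 : (0:ℝ) < Real.exp x := Real.exp_pos x
  have h4 : (1 - x) * Real.exp x ≤ 1 := by
    rw [Real.exp_neg] at h1
    calc (1 - x) * Real.exp x ≤ (Real.exp x)⁻¹ * Real.exp x :=
          mul_le_mul_of_nonneg_right h1 h3.le
      _ = 1 := inv_mul_cancel₀ h3.ne'
  nlinarith [mul_nonneg (mul_nonneg (neg_nonneg.2 hx) (neg_nonneg.2 hx)) (neg_nonneg.2 hx)]

private lemma exp_le_quad_pos {x : ℝ} (hx : 0 ≤ x) :
    Real.exp x ≤ 1 + x + x ^ 2 * Real.exp x := by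
  rcases le_or_gt 1 x with h | h
  · nlinarith [mul_nonneg (Real.exp_pos x).le (by nlinarith : (0:ℝ) ≤ x ^ 2 - 1)]
  · have h1 : 1 - x ≤ Real.exp (-x) := by linarith [Real.add_one_le_exp (-x)]
    have h3 : (0:ℝ) < Real.exp x := Real.exp_pos x
    have h4 : (1 - x) * Real.exp x ≤ 1 := by
      rw [Real.exp_neg] at h1
      calc (1 - x) * Real.exp x ≤ (Real.exp x)⁻¹ * Real.exp x :=
            mul_le_mul_of_nonneg_right h1 h3.le
        _ = 1 := inv_mul_cancel₀ h3.ne'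
    nlinarith [h3]

private lemma rpow_one_add_le {B p t : ℝ} (hp0 : 0 ≤ p) (hpB : p ≤ B) (ht : |t| ≤ 1/2) :
    (1 + t) ^ p ≤ 1 + p * t + B ^ 2 * Real.exp B * t ^ 2 := by
  obtain ⟨ht1, ht2⟩ := abs_le.mp ht
  have h0 : (0:ℝ) ≤ 1 + t := by linarith
  have hB0 : 0 ≤ B := le_trans hp0 hpB
  have h1 : (1 + t) ^ p ≤ Real.exp (t * p) := by
    calc (1 + t) ^ p ≤ (Real.exp t) ^ p :=
          Real.rpow_le_rpow h0 (by linarith [Real.add_one_le_exp t]) hp0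
      _ = Real.exp (t * p) := by
          rw [Real.rpow_def_of_pos (Real.exp_pos t), Real.log_exp]
  rcases le_or_gt 0 t with htp | htn
  · have hx : 0 ≤ t * p := mul_nonneg htp hp0
    have h2 := exp_le_quad_pos hx
    have e1 : Real.exp (t * p) ≤ Real.exp B := Real.exp_le_exp.2 (by nlinarith)
    have e2 : (t * p) ^ 2 ≤ B ^ 2 * t ^ 2 := by
      nlinarith [sq_nonneg t, mul_self_le_mul_self hp0 hpB]
    have e3 : (t * p) ^ 2 * Real.exp (t * p) ≤ B ^ 2 * t ^ 2 * Real.exp B := by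
      have := Real.exp_pos (t * p)
      nlinarith [sq_nonneg (t * p), sq_nonneg t, Real.exp_pos B]
    nlinarith
  · have hx : t * p ≤ 0 := mul_nonpos_of_nonpos_of_nonneg htn.le hp0
    have h2 := exp_le_quad_neg hx
    have e2 : (t * p) ^ 2 ≤ B ^ 2 * t ^ 2 := by
      nlinarith [sq_nonneg t, mul_self_le_mul_self hp0 hpB]
    have e4 : (1:ℝ) ≤ Real.exp B := Real.one_le_exp hB0
    nlinarith [sq_nonneg t, sq_nonneg B]

private lemma key_pos {B p a b : ℝ} (hp2 : 2 ≤ p) (hpB : p ≤ B) (ha : 0 < a)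
    (hb : 2 * |b| ≤ a) :
    |a + b| ^ p ≤ a ^ p + p * a ^ (p - 2) * a * b + B ^ 2 * Real.exp B * (a ^ (p - 2) * b ^ 2) := by
  have hp0 : (0:ℝ) ≤ p := by linarith
  set t : ℝ := b / a with htdef
  have ht : |t| ≤ 1 / 2 := by
    rw [abs_div, abs_of_pos ha, div_le_iff₀ ha]
    linarith [abs_nonneg b]
  have hab : a + b = a * (1 + t) := by rw [htdef]; field_simp
  have h0 : (0:ℝ) ≤ 1 + t := by linarith [(abs_le.mp ht).1]
  have habs : |a + b| = a * (1 + t) := by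
    rw [hab, abs_of_nonneg (mul_nonneg ha.le h0)]
  have hmul : |a + b| ^ p = a ^ p * (1 + t) ^ p := by
    rw [habs, Real.mul_rpow ha.le h0]
  have hstep : a ^ p * (1 + t) ^ p ≤ a ^ p * (1 + p * t + B ^ 2 * Real.exp B * t ^ 2) :=
    mul_le_mul_of_nonneg_left (rpow_one_add_le hp0 hpB ht) (Real.rpow_nonneg ha.le p)
  have hsplit : a ^ p = a ^ (p - 2) * a ^ 2 := by
    rw [← Real.rpow_natCast a 2, ← Real.rpow_add ha]
    norm_num
  have hkey : a ^ p * (1 + p * t + B ^ 2 * Real.exp B * t ^ 2)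
      = a ^ p + p * a ^ (p - 2) * a * b + B ^ 2 * Real.exp B * (a ^ (p - 2) * b ^ 2) := by
    rw [hsplit, htdef]
    field_simp
  rw [hmul, ← hkey]
  exact hstep

private lemma abs_add_rpow_le {B p a b : ℝ} (hp2 : 2 ≤ p) (hpB : p ≤ B) :
    |a + b| ^ p ≤ |a| ^ p + p * |a| ^ (p - 2) * a * b +
      (B ^ 2 * Real.exp B + 3 ^ B + B * 2 ^ B) * (|a| ^ (p - 2) * b ^ 2 + |b| ^ p) := by
  have hB2 : (2:ℝ) ≤ B := le_trans hp2 hpB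
  have hB0 : (0:ℝ) ≤ B := by linarith
  have hp0 : (0:ℝ) ≤ p := by linarith
  have hc1 : (0:ℝ) ≤ B ^ 2 * Real.exp B := by positivity
  have hc2 : (0:ℝ) ≤ (3:ℝ) ^ B := Real.rpow_nonneg (by norm_num) B
  have hc3 : (0:ℝ) ≤ B * 2 ^ B := mul_nonneg hB0 (Real.rpow_nonneg (by norm_num) B)
  have hq1 : (0:ℝ) ≤ |a| ^ (p-2) * b ^ 2 :=
    mul_nonneg (Real.rpow_nonneg (abs_nonneg a) _) (sq_nonneg b)
  have hq2 : (0:ℝ) ≤ |b| ^ p := Real.rpow_nonneg (abs_nonneg b) p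
  have hq3 : (0:ℝ) ≤ |a| ^ p := Real.rpow_nonneg (abs_nonneg a) p
  have pad : 0 ≤ ((3:ℝ) ^ B + B * 2 ^ B) * (|a| ^ (p-2) * b ^ 2 + |b| ^ p) :=
    mul_nonneg (by linarith) (by linarith)
  have padc : 0 ≤ B ^ 2 * Real.exp B * (|b| ^ p) := mul_nonneg hc1 hq2
  rcases le_or_gt (2 * |b|) |a| with hcase | hcase
  · -- |b| small relative to a
    rcases lt_trichotomy a 0 with hA | hA | hA
    · have h := key_pos hp2 hpB (a := -a) (b := -b) (by linarith)
        (by rw [abs_neg]; rwa [abs_of_neg hA] at hcase)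
      have h1 : |(-a) + (-b)| = |a + b| := by rw [show (-a) + (-b) = -(a+b) by ring, abs_neg]
      rw [h1] at h
      have h2 : -a = |a| := (abs_of_neg hA).symm
      rw [h2] at h
      have e : p * |a| ^ (p - 2) * |a| * -b = p * |a| ^ (p - 2) * a * b := by
        rw [← h2]; ring
      rw [e, neg_sq] at h
      nlinarith [h, pad, padc]
    · subst hA
      have hb0 : b = 0 := by
        have h' : 2 * |b| ≤ 0 := by simpa using hcase
        exact abs_eq_zero.mp (le_antisymm (by linarith [abs_nonneg b]) (abs_nonneg b))
      subst hb0
      simp [Real.zero_rpow (by linarith : p ≠ 0)]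
    · have h := key_pos hp2 hpB hA (by rwa [abs_of_pos hA] at hcase)
      rw [abs_of_pos hA]
      rw [abs_of_pos hA] at pad
      nlinarith [h, pad, padc]
  · -- |b| large
    have hbne : b ≠ 0 := by
      intro h; rw [h] at hcase; simp at hcase; linarith [abs_nonneg a, hcase]
    have hbpos : 0 < |b| := abs_pos.mpr hbne
    have h1 : |a + b| ^ p ≤ (3:ℝ) ^ B * |b| ^ p := by
      calc |a + b| ^ p ≤ (3 * |b|) ^ p := by
            apply Real.rpow_le_rpow (abs_nonneg _) _ hp0
            calc |a + b| ≤ |a| + |b| := abs_add_le a b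
              _ ≤ 3 * |b| := by linarith
        _ = (3:ℝ) ^ p * |b| ^ p := Real.mul_rpow (by norm_num) (abs_nonneg b)
        _ ≤ (3:ℝ) ^ B * |b| ^ p :=
            mul_le_mul_of_nonneg_right
              (Real.rpow_le_rpow_of_exponent_le (by norm_num) hpB) hq2
    have h2 : |p * |a| ^ (p - 2) * a * b| ≤ B * 2 ^ B * |b| ^ p := by
      have e0 : |p * |a| ^ (p - 2) * a * b| = p * |a| ^ (p - 2) * |a| * |b| := by
        rw [abs_mul, abs_mul, abs_mul, abs_of_nonneg hp0,
          abs_of_nonneg (Real.rpow_nonneg (abs_nonneg a) _)]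
      rw [e0]
      have h2b : (0:ℝ) ≤ (2 * |b|) ^ (p - 2) := Real.rpow_nonneg (by positivity) _
      have e1 : |a| ^ (p - 2) ≤ (2 * |b|) ^ (p - 2) :=
        Real.rpow_le_rpow (abs_nonneg a) hcase.le (by linarith)
      have e2a : |a| ^ (p-2) * |a| ≤ (2*|b|) ^ (p-2) * (2*|b|) :=
        mul_le_mul e1 hcase.le (abs_nonneg a) h2b
      have e2 := mul_le_mul_of_nonneg_left e2a (mul_nonneg hp0 (abs_nonneg b))
      have e3 : p * (2 * |b|) ^ (p - 2) * (2 * |b|) * |b| = p * 2 ^ (p-1) * |b| ^ p := by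
        have r1 : (2 * |b|) ^ (p - 2) = 2 ^ (p-2) * |b| ^ (p-2) :=
          Real.mul_rpow (by norm_num) (abs_nonneg b)
        have r2 : (2:ℝ) ^ (p-2) * 2 = 2 ^ (p-1) := by
          rw [show p - 1 = (p-2) + 1 by ring, Real.rpow_add_one (by norm_num : (2:ℝ) ≠ 0)]
        have r3 : |b| ^ (p-2) * |b| * |b| = |b| ^ p := by
          rw [show |b| ^ (p-2) * |b| * |b| = |b| ^ (p-2) * |b| ^ 2 by ring,
            ← Real.rpow_natCast |b| 2, ← Real.rpow_add hbpos]
          norm_num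
        calc p * (2 * |b|) ^ (p - 2) * (2 * |b|) * |b|
            = p * (2 ^ (p-2) * 2) * (|b| ^ (p-2) * |b| * |b|) := by rw [r1]; ring
          _ = p * 2 ^ (p-1) * |b| ^ p := by rw [r2, r3]
      have g1 : (2:ℝ) ^ (p-1) ≤ 2 ^ B :=
        Real.rpow_le_rpow_of_exponent_le (by norm_num) (by linarith)
      have g2 : (0:ℝ) ≤ (2:ℝ) ^ (p-1) := Real.rpow_nonneg (by norm_num) _
      have e4 : p * 2 ^ (p-1) * |b| ^ p ≤ B * 2 ^ B * |b| ^ p :=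
        mul_le_mul_of_nonneg_right (mul_le_mul hpB g1 g2 hB0) hq2
      calc p * |a| ^ (p - 2) * |a| * |b| = p * |b| * (|a| ^ (p-2) * |a|) := by ring
        _ ≤ p * |b| * ((2*|b|) ^ (p-2) * (2*|b|)) := e2
        _ = p * (2 * |b|) ^ (p - 2) * (2 * |b|) * |b| := by ring
        _ = p * 2 ^ (p-1) * |b| ^ p := e3
        _ ≤ B * 2 ^ B * |b| ^ p := e4
    have habs := abs_le.mp h2
    nlinarith [habs.1, h1, hq1, hq2, hq3, mul_nonneg hc1 hq1, mul_nonneg hc1 hq2,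
      mul_nonneg hc2 hq1, mul_nonneg hc3 hq1]

private lemma young_quad {p t x y : ℝ} (hp2 : 2 ≤ p) (ht : 0 < t) (hx : 0 ≤ x) (hy : 0 ≤ y) :
    x ^ (p - 2) * y ^ 2 ≤ t * x ^ p + t ^ ((2 - p)/2) * y ^ p := by
  have hp0 : (0:ℝ) < p := by linarith
  have hw1 : (0:ℝ) ≤ (p - 2)/p := div_nonneg (by linarith) hp0.le
  have hw2 : (0:ℝ) ≤ 2/p := by positivity
  have hw : (p - 2)/p + 2/p = 1 := by field_simp; ring
  have hp1 : (0:ℝ) ≤ t * x ^ p := mul_nonneg ht.le (Real.rpow_nonneg hx p)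
  have hp2' : (0:ℝ) ≤ t ^ ((2 - p)/2) * y ^ p :=
    mul_nonneg (Real.rpow_nonneg ht.le _) (Real.rpow_nonneg hy p)
  have key := Real.geom_mean_le_arith_mean2_weighted hw1 hw2 hp1 hp2' hw
  have lhs_eq : (t * x ^ p) ^ ((p - 2)/p) * (t ^ ((2 - p)/2) * y ^ p) ^ (2/p)
      = x ^ (p - 2) * y ^ 2 := by
    rw [Real.mul_rpow ht.le (Real.rpow_nonneg hx p),
      Real.mul_rpow (Real.rpow_nonneg ht.le _) (Real.rpow_nonneg hy p),
      ← Real.rpow_mul hx, ← Real.rpow_mul hy, ← Real.rpow_mul ht.le,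
      ← Real.rpow_natCast y 2]
    push_cast
    rw [show p * ((p - 2)/p) = p - 2 by field_simp,
      show p * (2/p) = 2 by field_simp,
      show (2 - p)/2 * (2/p) = (2 - p)/p by field_simp]
    rw [show t ^ ((p-2)/p) * x ^ (p-2) * (t ^ ((2-p)/p) * y ^ (2:ℝ))
        = (t ^ ((p-2)/p) * t ^ ((2-p)/p)) * (x ^ (p-2) * y ^ (2:ℝ)) by ring,
      ← Real.rpow_add ht, show (p-2)/p + (2-p)/p = 0 by ring, Real.rpow_zero, one_mul]
  rw [lhs_eq] at key
  calc x ^ (p - 2) * y ^ 2 ≤ (p-2)/p * (t * x ^ p) + 2/p * (t ^ ((2-p)/2) * y ^ p) := key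
    _ ≤ t * x ^ p + t ^ ((2 - p)/2) * y ^ p := by
        have w1le : (p-2)/p ≤ 1 := by rw [div_le_one hp0]; linarith
        have w2le : 2/p ≤ 1 := by rw [div_le_one hp0]; linarith
        nlinarith [hp1, hp2']

private lemma pointwise_bound {B p a b t : ℝ} (hp2 : 2 ≤ p) (hpB : p ≤ B) (ht : 0 < t) :
    |a + b| ^ p ≤ (1 + (B ^ 2 * Real.exp B + 3 ^ B + B * 2 ^ B) * t) * |a| ^ p
      + p * |a| ^ (p - 2) * a * b
      + (B ^ 2 * Real.exp B + 3 ^ B + B * 2 ^ B) * (t ^ ((2 - p)/2) + 1) * |b| ^ p := by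
  have hB2 : (2:ℝ) ≤ B := le_trans hp2 hpB
  have hc0 : (0:ℝ) ≤ B ^ 2 * Real.exp B + 3 ^ B + B * 2 ^ B := by
    have : (0:ℝ) ≤ (3:ℝ) ^ B := Real.rpow_nonneg (by norm_num) B
    have : (0:ℝ) ≤ B * 2 ^ B := mul_nonneg (by linarith) (Real.rpow_nonneg (by norm_num) B)
    positivity
  have h1 := abs_add_rpow_le (a := a) (b := b) hp2 hpB
  have h2 : |a| ^ (p-2) * b ^ 2 ≤ t * |a| ^ p + t ^ ((2 - p)/2) * |b| ^ p := by
    have := young_quad hp2 ht (abs_nonneg a) (abs_nonneg b)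
    rwa [sq_abs] at this
  nlinarith [mul_le_mul_of_nonneg_left h2 hc0]

private lemma abs_add_rpow_crude {p x y : ℝ} (hp0 : 0 ≤ p) :
    |x + y| ^ p ≤ 2 ^ p * (|x| ^ p + |y| ^ p) := by
  have h2 : (0:ℝ) ≤ 2 ^ p := Real.rpow_nonneg (by norm_num) p
  rcases le_total |x| |y| with h | h
  · calc |x+y|^p ≤ (2*|y|)^p :=
        Real.rpow_le_rpow (abs_nonneg _) (by linarith [abs_add_le x y]) hp0
      _ = 2^p * |y|^p := Real.mul_rpow (by norm_num) (abs_nonneg y)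
      _ ≤ 2^p*(|x|^p + |y|^p) := by
          nlinarith [Real.rpow_nonneg (abs_nonneg x) p]
  · calc |x+y|^p ≤ (2*|x|)^p :=
        Real.rpow_le_rpow (abs_nonneg _) (by linarith [abs_add_le x y]) hp0
      _ = 2^p * |x|^p := Real.mul_rpow (by norm_num) (abs_nonneg x)
      _ ≤ 2^p*(|x|^p + |y|^p) := by
          nlinarith [Real.rpow_nonneg (abs_nonneg y) p]

private lemma phi_abs_le {p x : ℝ} (hp2 : 2 ≤ p) :
    |p * |x| ^ (p - 2) * x| ≤ p * (1 + |x| ^ p) := by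
  have hp0 : (0:ℝ) ≤ p := by linarith
  have e0 : |p * |x| ^ (p - 2) * x| = p * (|x| ^ (p - 2) * |x|) := by
    rw [abs_mul, abs_mul, abs_of_nonneg hp0,
      abs_of_nonneg (Real.rpow_nonneg (abs_nonneg x) _)]
    ring
  rw [e0]
  have hxp : (0:ℝ) ≤ |x| ^ p := Real.rpow_nonneg (abs_nonneg x) p
  have key : |x| ^ (p - 2) * |x| ≤ 1 + |x| ^ p := by
    rcases eq_or_ne x 0 with h | h
    · subst h
      simp only [abs_zero, mul_zero]
      have : (0:ℝ) ≤ (0:ℝ) ^ p := Real.rpow_nonneg le_rfl p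
      linarith
    · have hx0 : 0 < |x| := abs_pos.mpr h
      have e1 : |x| ^ (p - 2) * |x| = |x| ^ (p - 1) := by
        rw [show p - 1 = (p - 2) + 1 by ring, Real.rpow_add_one hx0.ne']
      rw [e1]
      rcases le_total |x| 1 with hle | hle
      · have := Real.rpow_le_one (abs_nonneg x) hle (by linarith : (0:ℝ) ≤ p - 1)
        linarith
      · have := Real.rpow_le_rpow_of_exponent_le hle (by linarith : p - 1 ≤ p)
        linarith
  nlinarith

private lemma recursion_step {c m q N A : ℝ} (hc : 1 ≤ c) (hm : 0 ≤ m) (hq : 1 ≤ q)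
    (hN : N = 0 ∨ 1 ≤ N) (hA0 : 0 ≤ A)
    (hA : A ≤ 2*c*((4*c)^(q-1)+1)*m * N ^ q) :
    (1 + c * (2*c*(N+1))⁻¹) * A + c * ((2*c*(N+1)) ^ (q-1) + 1) * m
      ≤ 2*c*((4*c)^(q-1)+1)*m * (N+1) ^ q := by
  have hc0 : (0:ℝ) < c := by linarith
  have hN0 : (0:ℝ) ≤ N := by rcases hN with h | h <;> linarith
  have hX0 : (0:ℝ) < 2*c*(N+1) := by positivity
  set u : ℝ := (2*c*(N+1))⁻¹ with hudef
  have hu0 : 0 < u := by positivity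
  have hu : u * (2*c*(N+1)) = 1 := inv_mul_cancel₀ hX0.ne'
  have cu0 : (0:ℝ) ≤ c * u := by positivity
  set W : ℝ := (4*c)^(q-1) with hWdef
  have hW0 : (0:ℝ) ≤ W := Real.rpow_nonneg (by linarith) _
  set V : ℝ := (2*c*(N+1)) ^ (q-1) with hVdef
  have hV0 : (0:ℝ) ≤ V := Real.rpow_nonneg hX0.le _
  set M : ℝ := 2*c*(W+1)*m with hMdef
  have hM0 : (0:ℝ) ≤ M := by positivity
  rcases hN with h | h
  · subst h
    have hNq : (0:ℝ) ^ q = 0 := Real.zero_rpow (by linarith : q ≠ 0)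
    rw [hNq] at hA
    have hA0' : A = 0 := le_antisymm (by linarith [hA]) hA0
    subst hA0'  -- may fail; A is a variable so ok
    have h1q : ((0:ℝ)+1) ^ q = 1 := by rw [zero_add, Real.one_rpow]
    rw [h1q]
    have hVW : V ≤ W := by
      rw [hVdef, hWdef]
      apply Real.rpow_le_rpow (by positivity) (by linarith) (by linarith)
    nlinarith [mul_nonneg hm hW0, mul_nonneg hm hV0]
  · have hN0' : (0:ℝ) < N := by linarith
    set N1 : ℝ := N ^ (q-1) with hN1def
    have hN10 : (0:ℝ) ≤ N1 := Real.rpow_nonneg hN0 _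
    have k4 : (1:ℝ) ≤ N1 := by
      rw [hN1def]
      calc (1:ℝ) = 1 ^ (q-1) := (Real.one_rpow _).symm
        _ ≤ N ^ (q-1) := Real.rpow_le_rpow (by norm_num) h (by linarith)
    have kq : N ^ q = N1 * N := by
      have h' := Real.rpow_add_one hN0'.ne' (q-1)
      rw [show q - 1 + 1 = q by ring] at h'
      rw [hN1def]; exact h'
    have k2 : N1 * N + N1 ≤ (N+1) ^ q := by
      have e1 : (N+1) ^ q = (N+1)^(q-1) * (N+1) := by
        have h' := Real.rpow_add_one (by positivity : (N:ℝ)+1 ≠ 0) (q-1)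
        rw [show q - 1 + 1 = q by ring] at h'
        exact h'
      have e2 : N1 ≤ (N+1)^(q-1) :=
        Real.rpow_le_rpow hN0 (by linarith) (by linarith)
      calc N1 * N + N1 = N1 * (N+1) := by ring
        _ ≤ (N+1)^(q-1) * (N+1) := mul_le_mul_of_nonneg_right e2 (by linarith)
        _ = (N+1) ^ q := e1.symm
    have k3 : V ≤ W * N1 := by
      rw [hVdef, hWdef, hN1def, ← Real.mul_rpow (by positivity) hN0]
      apply Real.rpow_le_rpow hX0.le (by nlinarith) (by linarith)
    have k5 : c * u * N ≤ 1/2 := by nlinarith [hu, cu0]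
    have hA' : (1 + c*u)*A ≤ (1 + c*u)*(M*N^q) :=
      mul_le_mul_of_nonneg_left (by rw [hMdef]; exact hA) (by linarith)
    have t1 : (c*u*N)*(M*N1) ≤ (1/2)*(M*N1) :=
      mul_le_mul_of_nonneg_right k5 (mul_nonneg hM0 hN10)
    have t2 : c*m*V ≤ c*m*(W*N1) :=
      mul_le_mul_of_nonneg_left k3 (by positivity)
    have t3 : c*m ≤ c*m*N1 := by nlinarith [mul_nonneg hc0.le hm]
    calc (1 + c*u)*A + c*(V+1)*m
        ≤ (1 + c*u)*(M*N^q) + c*(V+1)*m := by linarith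
      _ = M*(N1*N) + (c*u*N)*(M*N1) + (c*m*V + c*m) := by rw [kq]; ring
      _ ≤ M*(N1*N) + (1/2)*(M*N1) + (c*m*(W*N1) + c*m*N1) := by linarith
      _ = M*(N1*N) + M*N1 := by rw [hMdef]; ring
      _ = M*(N1*N + N1) := by ring
      _ ≤ M*((N+1)^q) := mul_le_mul_of_nonneg_left k2 hM0
      _ = M*(N+1)^q := by ring

theorem stmt_13 {Ω : Type*} [MeasurableSpace Ω] (μ : Measure Ω) [IsProbabilityMeasure μ]
    (β γ K : ℝ) (hβ : 2 < β) (hγ : -1 < γ) (hK : 0 < K)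
    (ξ : ℕ → Ω → ℝ) (hmeas : ∀ i, Measurable (ξ i))
    (hindep : iIndepFun ξ μ)
    (hident : ∀ i, IdentDistrib (ξ i) (ξ 0) μ μ)
    (hint : Integrable (ξ 0) μ) (hcent : ∫ ω, ξ 0 ω ∂μ = 0)
    (hmom : ∀ p : ℝ, 2 ≤ p → p < β →
      ∫⁻ ω, ENNReal.ofReal (|ξ 0 ω| ^ p) ∂μ ≤ ENNReal.ofReal (K * (β - p) ^ (-γ - 1))) :
    ∃ C > (0 : ℝ), ∀ n : ℕ, ∀ p : ℝ, 2 ≤ p → p < β →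
      ∫⁻ ω, ENNReal.ofReal (|(Real.sqrt n)⁻¹ * ∑ i ∈ Finset.range n, ξ i ω| ^ p) ∂μ
        ≤ ENNReal.ofReal (C * (β - p) ^ (-γ - 1)) := by
  have hβ0 : (0:ℝ) < β := by linarith
  set c : ℝ := β ^ 2 * Real.exp β + 3 ^ β + β * 2 ^ β with hcdef
  have hc1 : (1:ℝ) ≤ c := by
    have h3 : (1:ℝ) ≤ (3:ℝ) ^ β := Real.one_le_rpow (by norm_num) hβ0.le
    have h1 : (0:ℝ) ≤ β ^ 2 * Real.exp β := by positivity
    have h2 : (0:ℝ) ≤ β * 2 ^ β := mul_nonneg hβ0.le (Real.rpow_nonneg (by norm_num) β)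
    rw [hcdef]; linarith
  have hc0 : (0:ℝ) < c := by linarith
  have hG0 : (0:ℝ) ≤ (4*c) ^ (β/2-1) := Real.rpow_nonneg (by linarith) _
  refine ⟨2*c*((4*c)^(β/2-1)+1)*K, mul_pos (mul_pos (by linarith) (by linarith)) hK, ?_⟩
  intro n p hp2 hpβ
  have hp0 : (0:ℝ) < p := by linarith
  have hβp : (0:ℝ) < β - p := by linarith
  have hmabs : Measurable fun x : ℝ => |x| ^ p :=
    ((Real.continuous_rpow_const hp0.le).comp continuous_abs).measurable
  have hint0 : Integrable (fun ω => |ξ 0 ω| ^ p) μ := by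
    refine ⟨(hmabs.comp (hmeas 0)).aestronglyMeasurable, ?_⟩
    rw [hasFiniteIntegral_iff_ofReal
      (Filter.Eventually.of_forall fun ω => Real.rpow_nonneg (abs_nonneg _) p)]
    exact lt_of_le_of_lt (hmom p hp2 hpβ) ENNReal.ofReal_lt_top
  set m : ℝ := ∫ ω, |ξ 0 ω| ^ p ∂μ with hmdef
  have hm0 : 0 ≤ m := integral_nonneg fun ω => Real.rpow_nonneg (abs_nonneg _) p
  have hmK : m ≤ K * (β - p) ^ (-γ - 1) := by
    have h1 := MeasureTheory.ofReal_integral_eq_lintegral_ofReal hint0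
      (Filter.Eventually.of_forall fun ω => Real.rpow_nonneg (abs_nonneg _) p)
    have h2 : ENNReal.ofReal m ≤ ENNReal.ofReal (K * (β - p) ^ (-γ - 1)) := by
      rw [hmdef, h1]; exact hmom p hp2 hpβ
    exact (ENNReal.ofReal_le_ofReal_iff (by positivity)).mp h2
  have hintξ : ∀ i, Integrable (ξ i) μ := fun i => ((hident i).integrable_iff).mpr hint
  have hcentξ : ∀ i, ∫ ω, ξ i ω ∂μ = 0 := fun i => ((hident i).integral_eq).trans hcent
  have hintξp : ∀ i, Integrable (fun ω => |ξ i ω| ^ p) μ := fun i =>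
    (((hident i).comp hmabs).integrable_iff).mpr hint0
  have hmomξ : ∀ i, ∫ ω, |ξ i ω| ^ p ∂μ = m := fun i => ((hident i).comp hmabs).integral_eq
  have hmeasS : ∀ j : ℕ, Measurable fun ω => ∑ i ∈ Finset.range j, ξ i ω := fun j =>
    Finset.measurable_sum _ fun i _ => hmeas i
  set M : ℝ := 2*c*((4*c)^(p/2-1)+1)*m with hMdef
  have main : ∀ j : ℕ, Integrable (fun ω => |∑ i ∈ Finset.range j, ξ i ω| ^ p) μ ∧
      ∫ ω, |∑ i ∈ Finset.range j, ξ i ω| ^ p ∂μ ≤ M * (j:ℝ) ^ (p/2) := by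
    intro j
    induction j with
    | zero =>
      constructor
      · simpa [Real.zero_rpow hp0.ne'] using (integrable_const (0:ℝ) (μ := μ))
      · simp [Real.zero_rpow hp0.ne', Real.zero_rpow (by positivity : p/2 ≠ 0)]
    | succ k ih =>
      have hrw : (fun ω => |∑ i ∈ Finset.range (k+1), ξ i ω| ^ p)
          = fun ω => |(∑ i ∈ Finset.range k, ξ i ω) + ξ k ω| ^ p := by
        funext ω; rw [Finset.sum_range_succ]
      rw [hrw]
      set S : Ω → ℝ := fun ω => ∑ i ∈ Finset.range k, ξ i ω with hSdef
      set t : ℝ := (2*c*((k:ℝ)+1))⁻¹ with htdef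
      have hX0 : (0:ℝ) < 2*c*((k:ℝ)+1) := by positivity
      have ht0 : 0 < t := by rw [htdef]; positivity
      have hpt : ∀ ω, |S ω + ξ k ω|^p ≤ (1 + c*t) * |S ω|^p
          + p * |S ω|^(p-2) * S ω * ξ k ω + c*(t^((2-p)/2)+1) * |ξ k ω|^p := by
        intro ω
        have := pointwise_bound (B := β) (a := S ω) (b := ξ k ω) (t := t) hp2 hpβ.le ht0
        rw [hcdef]
        linarith [this]
      have hφm : Measurable fun x : ℝ => p * |x|^(p-2) * x :=
        (measurable_const.mul
          (((Real.continuous_rpow_const (by linarith : (0:ℝ) ≤ p - 2)).comp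
            continuous_abs).measurable)).mul measurable_id
      have hφS_int : Integrable (fun ω => p * |S ω|^(p-2) * S ω) μ := by
        refine Integrable.mono' (((integrable_const (1:ℝ)).add ih.1).const_mul p)
          ((hφm.comp (hmeasS k)).aestronglyMeasurable) ?_
        filter_upwards with ω
        rw [Real.norm_eq_abs]
        have := phi_abs_le (x := S ω) hp2
        calc |p * |S ω| ^ (p-2) * S ω| ≤ p * (1 + |S ω| ^ p) := this
          _ = p * ((fun _ => (1:ℝ)) ω + (fun ω => |S ω| ^ p) ω) := by norm_num
      have hIndep : IndepFun S (ξ k) μ := by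
        have h := hindep.indepFun_sum_range_succ hmeas k
        have he : (∑ j ∈ Finset.range k, ξ j) = S := by
          funext ω; rw [hSdef]; simp
        rwa [he] at h
      have hIndepφ : IndepFun (fun ω => p * |S ω|^(p-2) * S ω) (ξ k) μ :=
        hIndep.comp hφm measurable_id
      have hprod_int : Integrable (fun ω => p * |S ω|^(p-2) * S ω * ξ k ω) μ :=
        hIndepφ.integrable_mul hφS_int (hintξ k)
      have hprod_eq : ∫ ω, p * |S ω|^(p-2) * S ω * ξ k ω ∂μ = 0 := by
        have h := hIndepφ.integral_fun_mul_eq_mul_integral hφS_int.aestronglyMeasurable (hintξ k).aestronglyMeasurable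
        have h2 : ∫ ω, p * |S ω|^(p-2) * S ω * ξ k ω ∂μ
            = (∫ ω, p * |S ω|^(p-2) * S ω ∂μ) * ∫ ω, ξ k ω ∂μ := h
        rw [h2, hcentξ k, mul_zero]
      have hLint : Integrable (fun ω => |S ω + ξ k ω|^p) μ := by
        refine Integrable.mono' ((ih.1.add (hintξp k)).const_mul (2^p))
          ((hmabs.comp ((hmeasS k).add (hmeas k))).aestronglyMeasurable) ?_
        filter_upwards with ω
        rw [Real.norm_eq_abs, abs_of_nonneg (Real.rpow_nonneg (abs_nonneg _) p)]
        exact abs_add_rpow_crude hp0.le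
      have hRint : Integrable (fun ω => (1 + c*t) * |S ω|^p
          + p * |S ω|^(p-2) * S ω * ξ k ω + c*(t^((2-p)/2)+1) * |ξ k ω|^p) μ :=
        ((ih.1.const_mul _).add hprod_int).add ((hintξp k).const_mul _)
      have hle := integral_mono hLint hRint hpt
      have i1 : Integrable (fun ω => (1 + c*t) * |S ω|^p) μ := ih.1.const_mul _
      have i3 : Integrable (fun ω => c*(t^((2-p)/2)+1) * |ξ k ω|^p) μ :=
        (hintξp k).const_mul _
      have i12 : Integrable (fun ω => (1 + c*t) * |S ω|^p
          + p * |S ω|^(p-2) * S ω * ξ k ω) μ := i1.add hprod_int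
      have heq : ∫ ω, ((1 + c*t) * |S ω|^p
          + p * |S ω|^(p-2) * S ω * ξ k ω + c*(t^((2-p)/2)+1) * |ξ k ω|^p) ∂μ
          = (1 + c*t) * (∫ ω, |S ω|^p ∂μ) + c*(t^((2-p)/2)+1) * m := by
        rw [integral_add i12 i3, integral_add i1 hprod_int,
          integral_const_mul, integral_const_mul, hprod_eq, hmomξ k]
        ring
      have htpow : t^((2-p)/2) = (2*c*((k:ℝ)+1))^(p/2-1) := by
        rw [htdef, Real.inv_rpow hX0.le, ← Real.rpow_neg hX0.le,
          show -((2-p)/2) = p/2-1 by ring]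
      have hA0 : 0 ≤ ∫ ω, |S ω|^p ∂μ :=
        integral_nonneg fun ω => Real.rpow_nonneg (abs_nonneg _) p
      have hN : ((k:ℝ) = 0 ∨ 1 ≤ (k:ℝ)) := by
        rcases Nat.eq_zero_or_pos k with h | h
        · left; simp [h]
        · right; exact_mod_cast h
      have hrec := recursion_step (c := c) (m := m) (q := p/2) (N := (k:ℝ))
        (A := ∫ ω, |S ω|^p ∂μ) hc1 hm0 (by linarith) hN hA0 (by rw [← hMdef]; exact ih.2)
      have hfinal : ∫ ω, |S ω + ξ k ω|^p ∂μ ≤ M * ((k:ℝ)+1) ^ (p/2) := by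
        rw [hMdef]
        calc ∫ ω, |S ω + ξ k ω|^p ∂μ
            ≤ (1 + c*t) * (∫ ω, |S ω|^p ∂μ) + c*(t^((2-p)/2)+1) * m :=
              le_trans hle (le_of_eq heq)
          _ = (1 + c*(2*c*((k:ℝ)+1))⁻¹) * (∫ ω, |S ω|^p ∂μ)
              + c*((2*c*((k:ℝ)+1))^(p/2-1)+1) * m := by rw [htpow, htdef]
          _ ≤ 2*c*((4*c)^(p/2-1)+1)*m * ((k:ℝ)+1) ^ (p/2) := hrec
      constructor
      · exact hLint
      · have : ((k+1:ℕ):ℝ) = (k:ℝ)+1 := by push_cast; ring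
        rw [this]
        exact hfinal
  obtain ⟨intn, bdn⟩ := main n
  rcases Nat.eq_zero_or_pos n with h0 | hpos
  · subst h0
    simp [Real.zero_rpow hp0.ne']
  · have hn1 : (1:ℝ) ≤ (n:ℝ) := by exact_mod_cast hpos
    have hnq0 : (0:ℝ) < (n:ℝ)^(p/2) := Real.rpow_pos_of_pos (by linarith) _
    have hfun : ∀ ω, |(Real.sqrt n)⁻¹ * ∑ i ∈ Finset.range n, ξ i ω| ^ p
        = ((n:ℝ)^(p/2))⁻¹ * |∑ i ∈ Finset.range n, ξ i ω| ^ p := by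
      intro ω
      rw [abs_mul, abs_of_nonneg (inv_nonneg.mpr (Real.sqrt_nonneg _)),
        Real.mul_rpow (inv_nonneg.mpr (Real.sqrt_nonneg _)) (abs_nonneg _),
        Real.inv_rpow (Real.sqrt_nonneg _), Real.sqrt_eq_rpow,
        ← Real.rpow_mul (Nat.cast_nonneg n), show 1/(2:ℝ) * p = p/2 by ring]
    have hrw2 : (fun ω => ENNReal.ofReal (|(Real.sqrt n)⁻¹ * ∑ i ∈ Finset.range n, ξ i ω| ^ p))
        = fun ω => ENNReal.ofReal (((n:ℝ)^(p/2))⁻¹ * |∑ i ∈ Finset.range n, ξ i ω| ^ p) :=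
      funext fun ω => by rw [hfun ω]
    rw [hrw2, ← MeasureTheory.ofReal_integral_eq_lintegral_ofReal (intn.const_mul _)
      (Filter.Eventually.of_forall fun ω => by positivity)]
    apply ENNReal.ofReal_le_ofReal
    rw [integral_const_mul]
    have step1 : ((n:ℝ)^(p/2))⁻¹ * ∫ ω, |∑ i ∈ Finset.range n, ξ i ω| ^ p ∂μ
        ≤ ((n:ℝ)^(p/2))⁻¹ * (M * (n:ℝ)^(p/2)) :=
      mul_le_mul_of_nonneg_left bdn (inv_nonneg.mpr hnq0.le)
    have step2 : ((n:ℝ)^(p/2))⁻¹ * (M * (n:ℝ)^(p/2)) = M := by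
      field_simp
    have step3 : M ≤ 2*c*((4*c)^(β/2-1)+1)*K * (β-p)^(-γ-1) := by
      have g1 : (4*c)^(p/2-1) ≤ (4*c)^(β/2-1) :=
        Real.rpow_le_rpow_of_exponent_le (by linarith) (by linarith)
      have g2 : (0:ℝ) ≤ (4*c)^(p/2-1) := Real.rpow_nonneg (by linarith) _
      rw [hMdef]
      calc 2*c*((4*c)^(p/2-1)+1)*m ≤ 2*c*((4*c)^(β/2-1)+1)*(K * (β-p)^(-γ-1)) := by
            apply mul_le_mul _ hmK hm0 _
            · apply mul_le_mul_of_nonneg_left _ (by linarith : (0:ℝ) ≤ 2*c)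
              linarith
            · positivity
        _ = 2*c*((4*c)^(β/2-1)+1)*K * (β-p)^(-γ-1) := by ring
    linarith
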